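/- Conversely, suppose r ∈ ℕ^m with r_k = n for some k, and t_i ∈ {1,…,n−r_i+1} for all i satisfy: for i < k, t_{i+1} ≤ t_i ≤ t_{i+1} + r_{i+1} − r_i, and for i > k, t_{i-1} ≤ t_i ≤ t_{i-1} + r_{i-1} − r_i, with all r_i ≥ 1. Then T = {(i,j) : t_i ≤ j < t_i + r_i} is an hv-convex polyomino with rowsum_i(T) = r_i. -/

import Mathlib

/-- The m×n grid of cells (i,j), 1 ≤ i ≤ m, 1 ≤ j ≤ n. -/
def grid (m n : ℕ) : Finset (ℕ × ℕ) := Finset.Icc 1 m ×ˢ Finset.Icc 1 n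

/-- Number of cells of T in row i (columns 1..n). -/
def rowsum (n : ℕ) (T : Finset (ℕ × ℕ)) (i : ℕ) : ℕ :=
  ((Finset.Icc 1 n).filter (fun j => (i, j) ∈ T)).card

/-- Number of cells of T in column j (rows 1..m). -/
def colsum (m : ℕ) (T : Finset (ℕ × ℕ)) (j : ℕ) : ℕ :=
  ((Finset.Icc 1 m).filter (fun i => (i, j) ∈ T)).card

/-- Horizontally convex: cells in each row are consecutive. -/
def HConvex (T : Finset (ℕ × ℕ)) : Prop :=
  ∀ i k l j, (i, k) ∈ T → (i, l) ∈ T → k ≤ j → j ≤ l → (i, j) ∈ T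

/-- Vertically convex: cells in each column are consecutive. -/
def VConvex (T : Finset (ℕ × ℕ)) : Prop :=
  ∀ j k l i, (k, j) ∈ T → (l, j) ∈ T → k ≤ i → i ≤ l → (i, j) ∈ T

/-- 4-adjacency of distinct cells: |i-i'| + |j-j'| ≤ 1. -/
def Adj (a b : ℕ × ℕ) : Prop :=
  (a.1 = b.1 ∧ (a.2 = b.2 + 1 ∨ b.2 = a.2 + 1)) ∨
  (a.2 = b.2 ∧ (a.1 = b.1 + 1 ∨ b.1 = a.1 + 1))

/-- T is connected under 4-adjacency. -/
def ConnectedIn (T : Finset (ℕ × ℕ)) : Prop :=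
  ∀ a ∈ T, ∀ b ∈ T,
    Relation.ReflTransGen (fun x y => x ∈ T ∧ y ∈ T ∧ Adj x y) a b

/-- A polyomino is a nonempty 4-connected set of cells. -/
def Polyomino (T : Finset (ℕ × ℕ)) : Prop := T.Nonempty ∧ ConnectedIn T

/-- An hv-convex polyomino in the m×n grid. -/
def HvConvexPolyomino (m n : ℕ) (T : Finset (ℕ × ℕ)) : Prop :=
  T ⊆ grid m n ∧ HConvex T ∧ VConvex T ∧ Polyomino T

/-- Upper-left corner region: closed under moving up and left within the grid. -/
def ULCorner (m n : ℕ) (A : Finset (ℕ × ℕ)) : Prop :=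
  A ⊆ grid m n ∧
  ∀ i j, (i, j) ∈ A → (2 ≤ i → (i - 1, j) ∈ A) ∧ (2 ≤ j → (i, j - 1) ∈ A)

/-- Upper-right corner region: closed under moving up and right within the grid. -/
def URCorner (m n : ℕ) (B : Finset (ℕ × ℕ)) : Prop :=
  B ⊆ grid m n ∧
  ∀ i j, (i, j) ∈ B → (2 ≤ i → (i - 1, j) ∈ B) ∧ (j + 1 ≤ n → (i, j + 1) ∈ B)

/-- Lower-left corner region: closed under moving down and left within the grid. -/
def LLCorner (m n : ℕ) (C : Finset (ℕ × ℕ)) : Prop :=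
  C ⊆ grid m n ∧
  ∀ i j, (i, j) ∈ C → (i + 1 ≤ m → (i + 1, j) ∈ C) ∧ (2 ≤ j → (i, j - 1) ∈ C)

/-- Lower-right corner region: closed under moving down and right within the grid. -/
def LRCorner (m n : ℕ) (D : Finset (ℕ × ℕ)) : Prop :=
  D ⊆ grid m n ∧
  ∀ i j, (i, j) ∈ D → (i + 1 ≤ m → (i + 1, j) ∈ D) ∧ (j + 1 ≤ n → (i, j + 1) ∈ D)

/-- The complement of T in the grid decomposes as four pairwise disjoint corner
regions A, B, C, D satisfying the two diagonal conditions: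
(i) (i-1,j-1) ∈ A → (i,j) ∉ D, stated as (i,j) ∈ A → (i+1,j+1) ∉ D, and
(ii) (i-1,j+1) ∈ B → (i,j) ∉ C, stated as (i,j+1) ∈ B → (i+1,j) ∉ C. -/
def CornerDecomp (m n : ℕ) (T A B C D : Finset (ℕ × ℕ)) : Prop :=
  ULCorner m n A ∧ URCorner m n B ∧ LLCorner m n C ∧ LRCorner m n D ∧
  Disjoint A B ∧ Disjoint A C ∧ Disjoint A D ∧
  Disjoint B C ∧ Disjoint B D ∧ Disjoint C D ∧
  grid m n \ T = A ∪ B ∪ C ∪ D ∧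
  (∀ i j, (i, j) ∈ A → (i + 1, j + 1) ∉ D) ∧
  (∀ i j, (i, j + 1) ∈ B → (i + 1, j) ∉ C)

/-- conversely, intervals satisfying the vertical-convexity
inequalities around a full row k (r k = n) define an hv-convex polyomino with
row sums r. -/
theorem stmt6 (m n k : ℕ) (r t : ℕ → ℕ)
    (hk : k ∈ Finset.Icc 1 m) (hrk : r k = n)
    (hr : ∀ i ∈ Finset.Icc 1 m, 1 ≤ r i)
    (ht : ∀ i ∈ Finset.Icc 1 m, 1 ≤ t i ∧ t i + r i ≤ n + 1)
    (hvc1 : ∀ i, 1 ≤ i → i < k → t (i + 1) ≤ t i ∧ t i + r i ≤ t (i + 1) + r (i + 1))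
    (hvc2 : ∀ i, k < i → i ≤ m → t (i - 1) ≤ t i ∧ t i + r i ≤ t (i - 1) + r (i - 1)) :
    HvConvexPolyomino m n ((grid m n).filter (fun p => t p.1 ≤ p.2 ∧ p.2 < t p.1 + r p.1)) ∧
    ∀ i ∈ Finset.Icc 1 m,
      rowsum n ((grid m n).filter (fun p => t p.1 ≤ p.2 ∧ p.2 < t p.1 + r p.1)) i = r i := by

  have hk1 : 1 ≤ k := (Finset.mem_Icc.mp hk).1
  have hkm : k ≤ m := (Finset.mem_Icc.mp hk).2
  set T := (grid m n).filter (fun p => t p.1 ≤ p.2 ∧ p.2 < t p.1 + r p.1) with hT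
  have hmem : ∀ i j : ℕ, (i, j) ∈ T ↔
      (1 ≤ i ∧ i ≤ m ∧ 1 ≤ j ∧ j ≤ n ∧ t i ≤ j ∧ j < t i + r i) := by
    intro i j
    simp [hT, grid, Finset.mem_filter, Finset.mem_product, Finset.mem_Icc, and_assoc]
  -- nesting toward k from above
  have nest1' : ∀ d i, 1 ≤ i → i + d ≤ k → t (i + d) ≤ t i ∧ t i + r i ≤ t (i + d) + r (i + d) := by
    intro d
    induction d with
    | zero => intro i _ _; simp
    | succ d ih =>
      intro i hi hid
      have h1 := ih i hi (by omega)
      have h2 := hvc1 (i + d) (by omega) (by omega)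
      rw [show i + (d + 1) = i + d + 1 from rfl]
      constructor <;> omega
  have nest2' : ∀ d i, k ≤ i → i + d ≤ m → t i ≤ t (i + d) ∧ t (i + d) + r (i + d) ≤ t i + r i := by
    intro d
    induction d with
    | zero => intro i _ _; simp
    | succ d ih =>
      intro i hi hid
      have h1 := ih i hi (by omega)
      have h2 := hvc2 (i + d + 1) (by omega) (by omega)
      simp only [Nat.add_sub_cancel] at h2
      rw [show i + (d + 1) = i + d + 1 from rfl]
      constructor <;> omega
  have nest1 : ∀ p i, 1 ≤ p → p ≤ i → i ≤ k → t i ≤ t p ∧ t p + r p ≤ t i + r i := by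
    intro p i hp hpi hik
    obtain ⟨d, rfl⟩ := Nat.exists_eq_add_of_le hpi
    exact nest1' d p hp hik
  have nest2 : ∀ q i, k ≤ i → i ≤ q → q ≤ m → t i ≤ t q ∧ t q + r q ≤ t i + r i := by
    intro q i hki hiq hqm
    obtain ⟨d, rfl⟩ := Nat.exists_eq_add_of_le hiq
    exact nest2' d i hki hqm
  have htk : t k = 1 := by
    have := ht k hk
    have := hr k hk
    omega
  have hn1 : 1 ≤ n := by have := hr k hk; omega
  -- key: every cell of column j below/above row i up to k is in T
  have col_mem : ∀ i j i', (i, j) ∈ T → (i ≤ i' ∧ i' ≤ k ∨ k ≤ i' ∧ i' ≤ i) → (i', j) ∈ T := by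
    intro i j i' hij hcase
    rw [hmem] at hij ⊢
    rcases hcase with ⟨h1, h2⟩ | ⟨h1, h2⟩
    · have := nest1 i i' (by omega) h1 h2
      have := nest1 i' k (by omega) h2 le_rfl
      refine ⟨by omega, by omega, by omega, by omega, by omega, by omega⟩
    · have := nest2 i i' h1 h2 (by omega)
      refine ⟨by omega, by omega, by omega, by omega, by omega, by omega⟩
  have hRsymm : Symmetric (fun x y : ℕ × ℕ => x ∈ T ∧ y ∈ T ∧ Adj x y) := by
    intro x y ⟨hx, hy, hadj⟩
    refine ⟨hy, hx, ?_⟩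
    unfold Adj at hadj ⊢
    tauto
  -- chains
  have vchain : ∀ d i j, (∀ e, e ≤ d → (i + e, j) ∈ T) →
      Relation.ReflTransGen (fun x y => x ∈ T ∧ y ∈ T ∧ Adj x y) (i, j) (i + d, j) := by
    intro d
    induction d with
    | zero => intro i j _; exact Relation.ReflTransGen.refl
    | succ d ih =>
      intro i j h
      refine Relation.ReflTransGen.tail (ih i j (fun e he => h e (by omega))) ?_
      exact ⟨h d (by omega), h (d + 1) le_rfl, Or.inr ⟨rfl, Or.inr rfl⟩⟩
  have hchain : ∀ d i j, (∀ e, e ≤ d → (i, j + e) ∈ T) →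
      Relation.ReflTransGen (fun x y => x ∈ T ∧ y ∈ T ∧ Adj x y) (i, j) (i, j + d) := by
    intro d
    induction d with
    | zero => intro i j _; exact Relation.ReflTransGen.refl
    | succ d ih =>
      intro i j h
      refine Relation.ReflTransGen.tail (ih i j (fun e he => h e (by omega))) ?_
      exact ⟨h d (by omega), h (d + 1) le_rfl, Or.inl ⟨rfl, Or.inr rfl⟩⟩
  -- connect any cell to row k (same column)
  have to_rowk : ∀ i j, (i, j) ∈ T →
      Relation.ReflTransGen (fun x y => x ∈ T ∧ y ∈ T ∧ Adj x y) (i, j) (k, j) := by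
    intro i j hij
    rcases le_or_gt i k with hik | hki
    · obtain ⟨d, rfl⟩ := Nat.exists_eq_add_of_le hik
      exact vchain d i j (fun e he => col_mem i j (i + e) hij (Or.inl ⟨by omega, by omega⟩))
    · obtain ⟨d, hd⟩ := Nat.exists_eq_add_of_le hki.le
      have := vchain d k j (fun e he => col_mem i j (k + e) hij (Or.inr ⟨by omega, by omega⟩))
      rw [← hd] at this
      exact (@Relation.ReflTransGen.stdSymm _ _ ⟨fun _ _ h => hRsymm h⟩).symm _ _ this
  -- connect within row k
  have rowk_mem : ∀ j, 1 ≤ j → j ≤ n → (k, j) ∈ T := by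
    intro j h1 h2
    rw [hmem]
    refine ⟨hk1, hkm, h1, h2, by omega, by omega⟩
  have rowk_conn : ∀ j j', 1 ≤ j → j ≤ n → 1 ≤ j' → j' ≤ n →
      Relation.ReflTransGen (fun x y => x ∈ T ∧ y ∈ T ∧ Adj x y) (k, j) (k, j') := by
    intro j j' h1 h2 h3 h4
    rcases le_or_gt j j' with h | h
    · obtain ⟨d, rfl⟩ := Nat.exists_eq_add_of_le h
      exact hchain d k j (fun e he => rowk_mem (j + e) (by omega) (by omega))
    · obtain ⟨d, hd⟩ := Nat.exists_eq_add_of_le h.le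
      have := hchain d k j' (fun e he => rowk_mem (j' + e) (by omega) (by omega))
      rw [← hd] at this
      exact (@Relation.ReflTransGen.stdSymm _ _ ⟨fun _ _ h => hRsymm h⟩).symm _ _ this
  constructor
  · refine ⟨Finset.filter_subset _ _, ?_, ?_, ?_, ?_⟩
    · -- HConvex
      intro i a b j ha hb hab hbj
      rw [hmem] at ha hb ⊢
      refine ⟨ha.1, ha.2.1, by omega, by omega, by omega, by omega⟩
    · -- VConvex
      intro j a b i ha hb hab hbj
      rcases le_or_gt i k with hik | hki
      · exact col_mem a j i ha (Or.inl ⟨hab, hik⟩)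
      · exact col_mem b j i hb (Or.inr ⟨hki.le, hbj⟩)
    · -- Nonempty
      exact ⟨(k, 1), rowk_mem 1 le_rfl hn1⟩
    · -- ConnectedIn
      intro a ha b hb
      obtain ⟨i, j⟩ := a
      obtain ⟨i', j'⟩ := b
      have hj := (hmem i j).mp ha
      have hj' := (hmem i' j').mp hb
      refine (to_rowk i j ha).trans ?_
      refine (rowk_conn j j' (by omega) (by omega) (by omega) (by omega)).trans ?_
      exact (@Relation.ReflTransGen.stdSymm _ _ ⟨fun _ _ h => hRsymm h⟩).symm _ _ (to_rowk i' j' hb)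
  · -- rowsums
    intro i hi
    rw [Finset.mem_Icc] at hi
    have hti := ht i (Finset.mem_Icc.mpr hi)
    have hri := hr i (Finset.mem_Icc.mpr hi)
    have : ((Finset.Icc 1 n).filter (fun j => (i, j) ∈ T)) = Finset.Ico (t i) (t i + r i) := by
      ext j
      rw [Finset.mem_filter, Finset.mem_Icc, Finset.mem_Ico, hmem]
      omega
    rw [rowsum, this, Nat.card_Ico]
    omega
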